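/- Let X, X₁, X₂, u_i, v_i be as in the context. Then the coefficient of z^{m+1} in det(I + z·X) equals (−1)^m·Σ_{i=1}^n u_i v_i + Σ_{a=0}^{m+1} trΛ^a(X₁)·trΛ^{m+1−a}(X₂). (Lemma 'block 1(ii)'.) -/

import Mathlib

open Polynomial

open Matrix

set_option maxHeartbeats 1000000
set_option synthInstance.maxHeartbeats 400000

lemma cof_aux {R : Type*} [CommRing R] (k : ℕ) (x : R) (D : Matrix (Fin (k+1)) (Fin (k+1)) R)
    (h0 : ∀ a b : Fin (k+1), a.val + 2 ≤ b.val → D a b = 0)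
    (hs : ∀ a b : Fin (k+1), b.val = a.val + 1 → D a b = x) :
    (D.updateRow (Fin.last k) (Pi.single 0 1)).det = (-1)^k * x^k := by
  rw [Matrix.det_succ_row _ (Fin.last k)]
  rw [Finset.sum_eq_single (0 : Fin (k+1))]
  · have hrow : (D.updateRow (Fin.last k) (Pi.single 0 1)) (Fin.last k) (0 : Fin (k+1)) = 1 := by
      rw [Matrix.updateRow_self]; simp
    rw [hrow]
    have hsub : ((D.updateRow (Fin.last k) (Pi.single 0 1)).submatrix
        (Fin.last k).succAbove (0 : Fin (k+1)).succAbove).det = x ^ k := by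
      have hS : ∀ a b : Fin k, ((D.updateRow (Fin.last k) (Pi.single 0 1)).submatrix
          (Fin.last k).succAbove (0 : Fin (k+1)).succAbove) a b = D a.castSucc b.succ := by
        intro a b
        rw [Matrix.submatrix_apply, Fin.succAbove_last, Fin.succAbove_zero,
          Matrix.updateRow_ne (Fin.castSucc_lt_last a).ne]
      rw [Matrix.det_of_lowerTriangular]
      · rw [Finset.prod_congr rfl (fun a _ => ?_), Finset.prod_const, Finset.card_univ,
          Fintype.card_fin]
        rw [hS]; exact hs _ _ (by simp)
      · intro a b hab
        have hab' : a < b := hab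
        rw [hS]; exact h0 _ _ (by
          rw [Fin.coe_castSucc, Fin.val_succ]
          have : (a:ℕ) < b := hab'
          omega)
    rw [hsub]
    simp [Fin.val_last]
  · intro j _ hj
    have : (D.updateRow (Fin.last k) (Pi.single 0 1)) (Fin.last k) j = 0 := by
      rw [Matrix.updateRow_self, Pi.single_apply, if_neg hj]
    rw [this]; ring
  · simp


/-- `trΛ^k(M)`: the coefficient of `z^k` in `det(I + z·M)`. -/
noncomputable def trLambda {N : ℕ} (M : Matrix (Fin N) (Fin N) ℂ) (k : ℕ) : ℂ :=
  ((1 + (Polynomial.X : ℂ[X]) • M.map Polynomial.C).det).coeff k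

theorem block1_ii (n m : ℕ) (hn : 1 ≤ n) (hm : 2 ≤ m)
    (Xm : Matrix (Fin (n + m)) (Fin (n + m)) ℂ)
    (h1 : ∀ i j : Fin (n + m), i.val < n → n + 1 ≤ j.val → Xm i j = 0)
    (h2 : ∀ i j : Fin (n + m), n ≤ i.val → i.val < n + m - 1 → j.val < n → Xm i j = 0)
    (h3 : ∀ i j : Fin (n + m), n ≤ i.val → n ≤ j.val → i.val + 2 ≤ j.val → Xm i j = 0)
    (h4 : ∀ i j : Fin (n + m), n ≤ i.val → j.val = i.val + 1 → Xm i j = 1)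
    (X₁ : Matrix (Fin n) (Fin n) ℂ)
    (hX₁ : ∀ i j : Fin n, X₁ i j = Xm (Fin.castLE (by omega) i) (Fin.castLE (by omega) j))
    (X₂ : Matrix (Fin m) (Fin m) ℂ)
    (hX₂ : ∀ a b : Fin m, X₂ a b = Xm (Fin.natAdd n a) (Fin.natAdd n b))
    (u v : Fin n → ℂ)
    (hu : ∀ i : Fin n, u i = Xm (Fin.castLE (by omega) i) ⟨n, by omega⟩)
    (hv : ∀ i : Fin n, v i = Xm ⟨n + m - 1, by omega⟩ (Fin.castLE (by omega) i)) :
    trLambda Xm (m + 1) =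
      (-1 : ℂ) ^ m * ∑ i : Fin n, u i * v i +
        ∑ a ∈ Finset.range (m + 2), trLambda X₁ a * trLambda X₂ (m + 1 - a) := by
  obtain ⟨k, rfl⟩ : ∃ k, m = k + 2 := ⟨m - 2, by omega⟩
  set φ : ℂ[X] →+* RatFunc ℂ := algebraMap ℂ[X] (RatFunc ℂ) with hφ
  have hφinj : Function.Injective φ := RatFunc.algebraMap_injective ℂ
  set Rp : Matrix (Fin (n+(k+2))) (Fin (n+(k+2))) ℂ[X] :=
    1 + (X : ℂ[X]) • Xm.map C with hRp
  set A : Matrix (Fin n) (Fin n) ℂ[X] := 1 + (X : ℂ[X]) • X₁.map C with hA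
  set Dm : Matrix (Fin (k+2)) (Fin (k+2)) ℂ[X] := 1 + (X : ℂ[X]) • X₂.map C with hDm
  set B : Matrix (Fin n) (Fin (k+2)) ℂ[X] :=
    Matrix.of (fun i b => if b = 0 then X * C (u i) else 0) with hB
  set Cm : Matrix (Fin (k+2)) (Fin n) ℂ[X] :=
    Matrix.of (fun a j => if a = Fin.last (k+1) then X * C (v j) else 0) with hCm
  -- block decomposition
  have hblock : Rp.submatrix finSumFinEquiv finSumFinEquiv = Matrix.fromBlocks A B Cm Dm := by
    funext ij ab
    rcases ij with i | a <;> rcases ab with j | b <;>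
      simp only [Matrix.submatrix_apply, finSumFinEquiv_apply_left, finSumFinEquiv_apply_right,
        Matrix.fromBlocks_apply₁₁, Matrix.fromBlocks_apply₁₂, Matrix.fromBlocks_apply₂₁,
        Matrix.fromBlocks_apply₂₂, hRp, hA, hB, hCm, hDm, Matrix.add_apply, Matrix.smul_apply,
        Matrix.map_apply, smul_eq_mul, Matrix.one_apply, Matrix.of_apply]
    · have e1 : Xm (Fin.castAdd (k+2) i) (Fin.castAdd (k+2) j) = X₁ i j := by
        exact (hX₁ i j).symm
      have e2 : (Fin.castAdd (k+2) i = Fin.castAdd (k+2) j) ↔ i = j := by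
        simp [Fin.ext_iff]
      rw [e1]
      by_cases hij : i = j <;> simp [hij, e2]
    · have hne : ¬ (Fin.castAdd (k+2) i = Fin.natAdd n b) := by
        simp only [Fin.ext_iff, Fin.coe_castAdd, Fin.coe_natAdd]
        omega
      rw [if_neg hne, zero_add]
      by_cases hb : b = 0
      · subst hb
        rw [if_pos rfl]
        have : (Fin.natAdd n (0 : Fin (k+2))) = (⟨n, by omega⟩ : Fin (n+(k+2))) := by
          apply Fin.ext
          simp
        rw [this]
        have e3 : Xm (Fin.castAdd (k+2) i) (⟨n, by omega⟩ : Fin (n+(k+2))) = u i :=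
          (hu i).symm
        rw [e3]
      · rw [if_neg hb]
        have : Xm (Fin.castAdd (k+2) i) (Fin.natAdd n b) = 0 := by
          apply h1 _ _ i.isLt
          simp only [Fin.coe_natAdd]
          have : (0:ℕ) < b.val := by
            rcases Nat.eq_zero_or_pos b.val with h | h
            · exact absurd (Fin.ext h) hb
            · exact h
          omega
        rw [this, map_zero, mul_zero]
    · have hne : ¬ (Fin.natAdd n a = Fin.castAdd (k+2) j) := by
        simp only [Fin.ext_iff, Fin.coe_castAdd, Fin.coe_natAdd]
        omega
      rw [if_neg hne, zero_add]
      by_cases ha : a = Fin.last (k+1)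
      · subst ha
        rw [if_pos rfl]
        have : (Fin.natAdd n (Fin.last (k+1))) = (⟨n + (k+2) - 1, by omega⟩ : Fin (n+(k+2))) := by
          apply Fin.ext
          simp only [Fin.coe_natAdd, Fin.val_last]
          omega
        rw [this]
        have : Xm (⟨n + (k+2) - 1, by omega⟩ : Fin (n+(k+2))) (Fin.castAdd (k+2) j)
            = v j := (hv j).symm
        rw [this]
      · rw [if_neg ha]
        have hav : a.val < k + 1 := by
          rcases Nat.lt_or_ge a.val (k+1) with h | h
          · exact h
          · exact absurd (Fin.ext (by omega : a.val = k+1)) ha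
        have : Xm (Fin.natAdd n a) (Fin.castAdd (k+2) j) = 0 := by
          apply h2 <;> simp only [Fin.coe_natAdd, Fin.coe_castAdd] <;> omega
        rw [this, map_zero, mul_zero]
    · have e1 : Xm (Fin.natAdd n a) (Fin.natAdd n b) = X₂ a b := (hX₂ a b).symm
      have e2 : (Fin.natAdd n a = Fin.natAdd n b) ↔ a = b := by
        simp [Fin.ext_iff]
      rw [e1]
      by_cases hab : a = b <;> simp [hab, e2]
  have hdet1 : Rp.det = (Matrix.fromBlocks A B Cm Dm).det := by
    rw [← hblock, Matrix.det_submatrix_equiv_self]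
  -- constant coefficient facts
  have hA0 : A.map ⇑(constantCoeff : ℂ[X] →+* ℂ) = 1 := by
    funext i j
    simp [hA, Matrix.map_apply, Matrix.add_apply, Matrix.smul_apply, smul_eq_mul,
      Matrix.one_apply, apply_ite (constantCoeff : ℂ[X] →+* ℂ),
      Polynomial.constantCoeff_apply, Polynomial.coeff_add, Polynomial.mul_coeff_zero,
      Polynomial.coeff_X_zero]
    split_ifs <;> simp
  have hdetA0 : constantCoeff A.det = 1 := by
    rw [show (constantCoeff A.det : ℂ) = (constantCoeff : ℂ[X] →+* ℂ) A.det from rfl,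
      RingHom.map_det, RingHom.mapMatrix_apply, hA0, Matrix.det_one]
  have hAdet_ne : A.det ≠ 0 := by
    intro h; rw [h, map_zero] at hdetA0; exact zero_ne_one hdetA0
  have hAK : IsUnit ((A.map ⇑φ).det) := by
    rw [show (A.map ⇑φ) = φ.mapMatrix A from rfl, ← RingHom.map_det]
    refine isUnit_iff_ne_zero.mpr (fun h => hAdet_ne (hφinj ?_))
    rw [h, map_zero]
  haveI invA : Invertible (A.map ⇑φ) := Matrix.invertibleOfIsUnitDet _ hAK
  set W : Matrix (Fin n) (Fin n) (RatFunc ℂ) := ⅟(A.map ⇑φ) with hWdef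
  set s : RatFunc ℂ := ∑ i, (∑ j, φ (X * C (v j)) * W j i) * φ (X * C (u i)) with hs
  have hprod : Cm.map ⇑φ * W * B.map ⇑φ =
      Matrix.of (fun a b => if a = Fin.last (k+1) ∧ b = 0 then s else 0) := by
    funext a b
    by_cases ha : a = Fin.last (k+1) <;> by_cases hb : b = 0 <;>
      simp [Matrix.mul_apply, Matrix.map_apply, hB, hCm, Matrix.of_apply,
        apply_ite ⇑φ, map_zero, ite_mul, zero_mul, mul_ite, mul_zero, ha, hb, hs,
        Finset.mul_sum, Finset.sum_mul]
  have hDsub : Dm.map ⇑φ - Cm.map ⇑φ * W * B.map ⇑φ =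
      Matrix.updateRow (Dm.map ⇑φ) (Fin.last (k+1))
        ((Dm.map ⇑φ) (Fin.last (k+1)) + (-s) • (Pi.single (0 : Fin (k+2)) (1 : RatFunc ℂ) : Fin (k+2) → RatFunc ℂ)) := by
    funext a b
    rw [hprod]
    by_cases ha : a = Fin.last (k+1)
    · subst ha
      by_cases hb : b = 0 <;>
        simp [Matrix.updateRow_self, Matrix.sub_apply, Matrix.of_apply, hb,
          Pi.single_apply, sub_eq_add_neg]
    · simp [Matrix.sub_apply, Matrix.updateRow_ne ha, Matrix.of_apply, ha]
  have hcof : (Matrix.updateRow (Dm.map ⇑φ) (Fin.last (k+1)) (Pi.single 0 1)).det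
      = (-1)^(k+1) * (φ X)^(k+1) := by
    apply cof_aux
    · intro a b hab
      have hz : X₂ a b = 0 := by
        rw [hX₂]; apply h3 <;> simp only [Fin.coe_natAdd] <;> omega
      have hne : a ≠ b := by
        intro h; subst h; omega
      simp [hDm, Matrix.map_apply, Matrix.add_apply, Matrix.smul_apply, smul_eq_mul,
        Matrix.one_apply, hne, hz]
    · intro a b hab
      have hone : X₂ a b = 1 := by
        rw [hX₂]; apply h4 <;> simp only [Fin.coe_natAdd] <;> omega
      have hne : a ≠ b := by
        intro h; subst h; omega
      simp [hDm, Matrix.map_apply, Matrix.add_apply, Matrix.smul_apply, smul_eq_mul,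
        Matrix.one_apply, hne, hone]
  have hdet3 : φ Rp.det = φ A.det * (φ Dm.det + (-s) * ((-1)^(k+1) * (φ X)^(k+1))) := by
    calc φ Rp.det = ((Matrix.fromBlocks A B Cm Dm).map ⇑φ).det := by
          rw [hdet1, RingHom.map_det, RingHom.mapMatrix_apply]
      _ = (Matrix.fromBlocks (A.map ⇑φ) (B.map ⇑φ) (Cm.map ⇑φ) (Dm.map ⇑φ)).det := by
          rw [Matrix.fromBlocks_map]
      _ = (A.map ⇑φ).det * ((Dm.map ⇑φ) - Cm.map ⇑φ * W * B.map ⇑φ).det := by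
          rw [Matrix.det_fromBlocks₁₁, hWdef]
      _ = φ A.det * (φ Dm.det + (-s) * ((-1)^(k+1) * (φ X)^(k+1))) := by
          rw [hDsub, Matrix.det_updateRow_add, Matrix.updateRow_eq_self,
            Matrix.det_updateRow_smul, hcof]
          rw [show (A.map ⇑φ).det = φ A.det from (RingHom.map_det φ A).symm,
            show (Dm.map ⇑φ).det = φ Dm.det from (RingHom.map_det φ Dm).symm]
  have hadjW : (A.map ⇑φ).det • W = (A.map ⇑φ).adjugate := by
    calc (A.map ⇑φ).det • W = W * ((A.map ⇑φ).det • 1) := by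
          rw [Matrix.mul_smul, Matrix.mul_one]
      _ = W * ((A.map ⇑φ) * (A.map ⇑φ).adjugate) := by rw [Matrix.mul_adjugate]
      _ = (W * (A.map ⇑φ)) * (A.map ⇑φ).adjugate := by rw [Matrix.mul_assoc]
      _ = (A.map ⇑φ).adjugate := by rw [hWdef, invOf_mul_self, Matrix.one_mul]
  set Q : ℂ[X] := ∑ i, (∑ j, (X * C (v j)) * A.adjugate j i) * (X * C (u i)) with hQdef
  have hQs : φ Q = (A.map ⇑φ).det * s := by
    rw [hQdef, _root_.map_sum, hs, Finset.mul_sum]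
    refine Finset.sum_congr rfl (fun i _ => ?_)
    rw [_root_.map_mul, _root_.map_sum]
    rw [show (A.map ⇑φ).det * ((∑ j, φ (X * C (v j)) * W j i) * φ (X * C (u i)))
        = ((A.map ⇑φ).det * (∑ j, φ (X * C (v j)) * W j i)) * φ (X * C (u i)) from
      (mul_assoc _ _ _).symm]
    congr 1
    rw [Finset.mul_sum]
    refine Finset.sum_congr rfl (fun j _ => ?_)
    rw [_root_.map_mul]
    have hadje : φ (A.adjugate j i) = (A.map ⇑φ).adjugate j i := by
      have h := RingHom.map_adjugate φ A
      calc φ (A.adjugate j i) = (φ.mapMatrix A.adjugate) j i := rfl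
        _ = ((φ.mapMatrix A).adjugate) j i := by rw [h]
        _ = (A.map ⇑φ).adjugate j i := rfl
    rw [hadje, ← hadjW]
    simp only [Matrix.smul_apply, smul_eq_mul]
    ring
  have hKid : φ Rp.det = φ (A.det * Dm.det + (-1)^(k+2) * (X^(k+1) * Q)) := by
    rw [hdet3, _root_.map_add, _root_.map_mul, _root_.map_mul, _root_.map_mul, _root_.map_pow, _root_.map_pow, _root_.map_neg, _root_.map_one, hQs]
    rw [show (A.map ⇑φ).det = φ A.det from (RingHom.map_det φ A).symm]
    ring
  have hpoly : Rp.det = A.det * Dm.det + (-1)^(k+2) * (X^(k+1) * Q) := hφinj hKid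
  set Q₀ : ℂ[X] := ∑ i, (∑ j, C (v j) * A.adjugate j i) * C (u i) with hQ0
  have hQQ0 : (X : ℂ[X])^(k+1) * Q = X^(k+3) * Q₀ := by
    rw [hQdef, hQ0, Finset.mul_sum, Finset.mul_sum]
    refine Finset.sum_congr rfl (fun i _ => ?_)
    rw [Finset.sum_mul, Finset.sum_mul, Finset.mul_sum, Finset.mul_sum]
    refine Finset.sum_congr rfl (fun j _ => ?_)
    ring
  have hadj0 : A.adjugate.map ⇑(constantCoeff : ℂ[X] →+* ℂ) = 1 := by
    have h := RingHom.map_adjugate (constantCoeff : ℂ[X] →+* ℂ) A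
    rw [← RingHom.mapMatrix_apply, h, RingHom.mapMatrix_apply, hA0, Matrix.adjugate_one]
  have hadje : ∀ j i : Fin n, constantCoeff (A.adjugate j i) = if j = i then (1:ℂ) else 0 := by
    intro j i
    have h : (A.adjugate.map ⇑(constantCoeff : ℂ[X] →+* ℂ)) j i
        = (1 : Matrix (Fin n) (Fin n) ℂ) j i := by rw [hadj0]
    simpa [Matrix.map_apply, Matrix.one_apply] using h
  have hQ0c : Q₀.coeff 0 = ∑ i : Fin n, u i * v i := by
    have h0 : Q₀.coeff 0 = constantCoeff Q₀ := rfl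
    rw [h0, hQ0, _root_.map_sum]
    have : ∀ i : Fin n, constantCoeff ((∑ j, C (v j) * A.adjugate j i) * C (u i))
        = v i * u i := by
      intro i
      rw [_root_.map_mul, _root_.map_sum]
      have : ∀ j : Fin n, constantCoeff (C (v j) * A.adjugate j i)
          = if j = i then v j else 0 := by
        intro j
        rw [_root_.map_mul, hadje j i, Polynomial.constantCoeff_apply, Polynomial.coeff_C_zero]
        split_ifs <;> simp
      rw [Finset.sum_congr rfl (fun j _ => this j), Finset.sum_ite_eq' Finset.univ i v,
        if_pos (Finset.mem_univ i), Polynomial.constantCoeff_apply, Polynomial.coeff_C_zero]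
    rw [Finset.sum_congr rfl (fun i _ => this i)]
    exact Finset.sum_congr rfl (fun i _ => mul_comm (v i) (u i))
  -- final assembly
  have hC1 : (A.det * Dm.det).coeff (k+2+1)
      = ∑ a ∈ Finset.range (k+2+2), trLambda X₁ a * trLambda X₂ (k+2+1-a) := by
    rw [Polynomial.coeff_mul, Finset.Nat.sum_antidiagonal_eq_sum_range_succ_mk]
    refine Finset.sum_congr rfl (fun a _ => ?_)
    simp only [trLambda]
    rfl
  have hC2 : (((-1:ℂ[X])^(k+2)) * ((X:ℂ[X])^(k+1) * Q)).coeff (k+2+1)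
      = (-1:ℂ)^(k+2) * ∑ i, u i * v i := by
    rw [hQQ0]
    rw [show ((-1:ℂ[X])^(k+2)) = C ((-1:ℂ)^(k+2)) by rw [_root_.map_pow, _root_.map_neg, _root_.map_one]]
    rw [Polynomial.coeff_C_mul]
    have h0' := Polynomial.coeff_X_pow_mul Q₀ (k+3) 0
    rw [zero_add] at h0'
    rw [show (k+2+1) = k+3 from rfl, h0', hQ0c]
  show Rp.det.coeff (k+2+1) = _
  rw [hpoly, Polynomial.coeff_add, hC1, hC2, add_comm]
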